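/- Let A be a P ≥ 0 times differentiable complex-valued function compactly supported in a finite interval [a,b], and suppose there exist quantities A₀ and A₁ such that for every non-negative integer ν ≤ P and every x ∈ [a,b], |A^{(ν)}(x)| ≪ A₀ A₁^{-ν}. Let B be a function which is real-valued on [a,b] and holomorphic throughout the complex domain consisting of all points at distance less than ϱ from the interval [a,b], and assume there exists a quantity B₁ with 0 < B₁ ≪ |B'(x)| for every x in that domain. Then ∫_a^b A(x) e(B(x)) dx ≪ A₀ (A₁ B₁)^{-P} (1 + A₁/ϱ)^P (b − a). -/

import Mathlib

open Real Complex

noncomputable section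

-- ### Cauchy estimate
lemma cauchy_est {f : ℂ → ℂ} {c : ℂ} {r M : ℝ} (hr : 0 < r)
    (hf : DifferentiableOn ℂ f (Metric.closedBall c r))
    (hM : ∀ z ∈ Metric.closedBall c r, ‖f z‖ ≤ M) (n : ℕ) :
    ‖iteratedDeriv n f c‖ ≤ n.factorial * M / r ^ n := by
  lift r to NNReal using hr.le with R hR
  have hR0 : 0 < R := by exact_mod_cast hr
  have h := hf.hasFPowerSeriesOnBall hR0
  have hfac := h.factorial_smul (1 : ℂ) n
  have hnorm : ‖iteratedDeriv n f c‖ ≤ (n.factorial : ℝ) * ‖cauchyPowerSeries f c R n‖ := by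
    rw [iteratedDeriv_eq_iteratedFDeriv, ← hfac, ← Nat.cast_smul_eq_nsmul ℂ, norm_smul]
    simp only [Complex.norm_natCast]
    gcongr
    calc ‖(cauchyPowerSeries f c R n) fun _ => (1:ℂ)‖
        ≤ ‖cauchyPowerSeries f c R n‖ * ∏ _i : Fin n, ‖(1:ℂ)‖ :=
          (cauchyPowerSeries f c R n).le_opNorm _
      _ = ‖cauchyPowerSeries f c R n‖ := by simp
  have hint : (∫ θ : ℝ in (0)..2 * π, ‖f (circleMap c R θ)‖) ≤ 2 * π * M := by
    calc (∫ θ : ℝ in (0)..2 * π, ‖f (circleMap c R θ)‖) ≤ ∫ θ : ℝ in (0)..2*π, M := by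
          apply intervalIntegral.integral_mono_on Real.two_pi_pos.le _ intervalIntegrable_const
          · intro θ hθ
            exact hM _ (by simpa using Metric.sphere_subset_closedBall (circleMap_mem_sphere' c R θ))
          · apply ContinuousOn.intervalIntegrable
            exact (hf.continuousOn.comp (continuous_circleMap c R).continuousOn
              (fun θ _ => by
                simpa using Metric.sphere_subset_closedBall (circleMap_mem_sphere' c R θ))).norm
      _ = 2 * π * M := by simp [mul_comm]
  have hps := norm_cauchyPowerSeries_le f c R n
  have hMn : (0:ℝ) ≤ M := le_trans (norm_nonneg _) (hM c (Metric.mem_closedBall_self hr.le))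
  calc ‖iteratedDeriv n f c‖ ≤ (n.factorial : ℝ) * ‖cauchyPowerSeries f c R n‖ := hnorm
    _ ≤ (n.factorial : ℝ) * (((2 * π)⁻¹ * (2 * π * M)) * |(R:ℝ)|⁻¹ ^ n) := by
        have h2 : ‖cauchyPowerSeries f c R n‖ ≤ ((2 * π)⁻¹ * (2*π*M)) * |(R:ℝ)|⁻¹ ^ n :=
          hps.trans (mul_le_mul_of_nonneg_right
            (mul_le_mul_of_nonneg_left hint (by positivity)) (by positivity))
        gcongr
    _ = n.factorial * M / (R:ℝ) ^ n := by
        rw [_root_.abs_of_nonneg R.coe_nonneg, inv_pow]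
        field_simp

-- ### iterated derivatives of analytic functions
lemma analyticOnNhd_iteratedDeriv {f : ℂ → ℂ} {U : Set ℂ}
    (han : AnalyticOnNhd ℂ f U) (n : ℕ) :
    AnalyticOnNhd ℂ (iteratedDeriv n f) U := by
  induction n with
  | zero => simpa using han
  | succ m ihm =>
    rw [iteratedDeriv_succ]
    exact ihm.deriv

-- ### restriction to the real line
lemma iteratedDeriv_comp_ofReal {f : ℂ → ℂ} {U : Set ℂ} (hU : IsOpen U)
    (hf : DifferentiableOn ℂ f U) (n : ℕ) :
    ∀ x : ℝ, (x:ℂ) ∈ U → iteratedDeriv n (fun t : ℝ => f t) x = iteratedDeriv n f x := by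
  induction n with
  | zero => intro x hx; simp
  | succ n ih =>
    intro x hx
    have han : AnalyticOnNhd ℂ f U := hf.analyticOnNhd hU
    have hitan : AnalyticOnNhd ℂ (iteratedDeriv n f) U :=
      analyticOnNhd_iteratedDeriv han n
    have hUr : IsOpen ((fun t : ℝ => (t:ℂ)) ⁻¹' U) :=
      hU.preimage Complex.continuous_ofReal
    have hxU : x ∈ ((fun t : ℝ => (t:ℂ)) ⁻¹' U) := hx
    have hev : (fun t : ℝ => iteratedDeriv n (fun s : ℝ => f s) t)
        =ᶠ[nhds x] (fun t : ℝ => iteratedDeriv n f (t:ℂ)) := by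
      filter_upwards [hUr.mem_nhds hxU] with t ht
      exact ih t ht
    rw [iteratedDeriv_succ, iteratedDeriv_succ, hev.deriv_eq]
    have hd : HasDerivAt (iteratedDeriv n f) (deriv (iteratedDeriv n f) (x:ℂ)) (x:ℂ) :=
      ((hitan (x:ℂ) hx).differentiableAt.hasDerivAt)
    exact hd.comp_ofReal.deriv

-- ### vanishing at the boundary
lemma boundary_zero_left {A : ℝ → ℂ} (hc : Continuous A) {a b : ℝ}
    (hs : Function.support A ⊆ Set.Icc a b) : A a = 0 := by
  have h1 : Filter.Tendsto A (nhdsWithin a (Set.Iio a)) (nhds (A a)) :=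
    (hc.tendsto a).mono_left nhdsWithin_le_nhds
  have h2 : Filter.Tendsto A (nhdsWithin a (Set.Iio a)) (nhds 0) := by
    apply Filter.Tendsto.congr' _ tendsto_const_nhds
    filter_upwards [self_mem_nhdsWithin] with x hx
    by_contra hne
    exact absurd (hs (Function.mem_support.mpr fun h => hne h.symm)).1 (not_le.mpr hx)
  exact tendsto_nhds_unique h1 h2

lemma boundary_zero_right {A : ℝ → ℂ} (hc : Continuous A) {a b : ℝ}
    (hs : Function.support A ⊆ Set.Icc a b) : A b = 0 := by
  have h1 : Filter.Tendsto A (nhdsWithin b (Set.Ioi b)) (nhds (A b)) :=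
    (hc.tendsto b).mono_left nhdsWithin_le_nhds
  have h2 : Filter.Tendsto A (nhdsWithin b (Set.Ioi b)) (nhds 0) := by
    apply Filter.Tendsto.congr' _ tendsto_const_nhds
    filter_upwards [self_mem_nhdsWithin] with x hx
    by_contra hne
    exact absurd (hs (Function.mem_support.mpr fun h => hne h.symm)).2 (not_le.mpr hx)
  exact tendsto_nhds_unique h1 h2

-- ### the key arithmetic term bound
lemma term_bound (P ν i : ℕ) (hν : ν ≤ P) (hi : i ≤ ν + 1) {cA cB A₀ A₁ B₁ : ℝ}
    (hcA : 0 ≤ cA) (hcB : 0 ≤ cB) (hA₀ : 0 < A₀) (hA₁ : 0 < A₁) (hB₁ : 0 < B₁) :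
    ((ν+1).choose i : ℝ) * (cA * A₀ * A₁ ^ (-(i:ℝ))) *
      ((ν+1-i).factorial * (cB / (2 * π * B₁)) / (A₁/2) ^ (ν+1-i))
    ≤ cA * cB * ((P+1).factorial * 2^(P+1)) * (A₀ * (A₁ * B₁)⁻¹) * A₁ ^ (-(ν:ℝ)) := by
  set m := ν + 1 - i with hm
  have him : i + m = ν + 1 := by omega
  have key : A₁ ^ (-(i:ℝ)) / (A₁/2) ^ m ≤ 2^(P+1) * (A₁ ^ (-(ν:ℝ)) * A₁⁻¹) := by
    have h1 : (A₁/2 : ℝ) ^ m = A₁ ^ m / 2 ^ m := div_pow A₁ 2 m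
    have h2 : A₁ ^ (-(i:ℝ)) / (A₁ ^ m : ℝ) = A₁ ^ (-(ν:ℝ)) * A₁⁻¹ := by
      rw [← Real.rpow_natCast A₁ m, ← Real.rpow_neg_one A₁,
        div_eq_mul_inv, ← Real.rpow_neg hA₁.le, ← Real.rpow_add hA₁,
        ← Real.rpow_add hA₁]
      congr 1
      have : (i : ℝ) + (m : ℝ) = (ν : ℝ) + 1 := by exact_mod_cast congrArg (Nat.cast (R := ℝ)) him
      linarith
    have h3 : (2:ℝ)^m ≤ 2^(P+1) := by
      apply pow_le_pow_right₀ one_le_two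
      omega
    have h4 : (0:ℝ) ≤ A₁ ^ (-(ν:ℝ)) * A₁⁻¹ := by positivity
    rw [h1, div_div_eq_mul_div]
    calc A₁ ^ (-(i:ℝ)) * 2^m / A₁^m = 2^m * (A₁ ^ (-(i:ℝ)) / A₁^m) := by ring
      _ = 2^m * (A₁ ^ (-(ν:ℝ)) * A₁⁻¹) := by rw [h2]
      _ ≤ 2^(P+1) * (A₁ ^ (-(ν:ℝ)) * A₁⁻¹) := mul_le_mul_of_nonneg_right h3 h4
  have key2 : ((ν+1).choose i * m.factorial : ℝ) ≤ (P+1).factorial := by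
    have h5 : (ν+1).choose i * m.factorial ≤ (ν+1).factorial := by
      calc (ν+1).choose i * m.factorial ≤ (ν+1).choose i * i.factorial * m.factorial :=
            Nat.mul_le_mul_right _ (Nat.le_mul_of_pos_right _ i.factorial_pos) |>.trans_eq (by ring)
        _ = (ν+1).factorial := Nat.choose_mul_factorial_mul_factorial hi
    calc ((ν+1).choose i * m.factorial : ℝ) ≤ ((ν+1).factorial : ℝ) := by exact_mod_cast h5
      _ ≤ (P+1).factorial := by exact_mod_cast Nat.factorial_le (by omega)
  have key3 : cB / (2 * π * B₁) ≤ cB * B₁⁻¹ := by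
    rw [← div_eq_mul_inv]
    gcongr
    nlinarith [Real.pi_gt_three, hB₁]
  calc ((ν+1).choose i : ℝ) * (cA * A₀ * A₁ ^ (-(i:ℝ))) *
      (m.factorial * (cB / (2 * π * B₁)) / (A₁/2) ^ m)
      = (((ν+1).choose i : ℝ) * m.factorial) * (cB / (2*π*B₁)) * (cA * A₀) *
        (A₁ ^ (-(i:ℝ)) / (A₁/2) ^ m) := by ring
    _ ≤ ((P+1).factorial : ℝ) * (cB * B₁⁻¹) * (cA * A₀) * (2^(P+1) * (A₁ ^ (-(ν:ℝ)) * A₁⁻¹)) := by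
        gcongr <;> positivity
    _ = cA * cB * ((P+1).factorial * 2^(P+1)) * (A₀ * (A₁ * B₁)⁻¹) * A₁ ^ (-(ν:ℝ)) := by
        rw [mul_inv (A₁) B₁]
        ring

-- ### the main induction
lemma aux_lemma (P : ℕ) : ∀ cA cB : ℝ, ∃ C > 0, ∀ (a b A₀ A₁ B₁ ϱ : ℝ) (A : ℝ → ℂ) (B : ℂ → ℂ),
    a ≤ b → 0 < A₀ → 0 < A₁ → 0 < B₁ → 0 < ϱ → A₁ ≤ ϱ →
    ContDiff ℝ (P : ℕ∞) A →
    Function.support A ⊆ Set.Icc a b →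
    (∀ ν : ℕ, ν ≤ P → ∀ x ∈ Set.Icc a b, ‖iteratedDeriv ν A x‖ ≤ cA * A₀ * A₁ ^ (-(ν:ℝ))) →
    (∀ x ∈ Set.Icc a b, (B (x:ℂ)).im = 0) →
    DifferentiableOn ℂ B {z : ℂ | ∃ x ∈ Set.Icc a b, ‖z - (x:ℂ)‖ < ϱ} →
    (∀ z ∈ {z : ℂ | ∃ x ∈ Set.Icc a b, ‖z - (x:ℂ)‖ < ϱ},
      B₁ ≤ cB * ‖deriv B z‖) →
    ‖∫ x in a..b, A x * Complex.exp (2*(π:ℂ)*Complex.I * B (x:ℂ))‖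
      ≤ C * A₀ * (A₁ * B₁) ^ (-(P:ℝ)) * (b - a) := by
  induction P with
  | zero =>
    intro cA cB
    refine ⟨|cA| + 1, by positivity, ?_⟩
    intro a b A₀ A₁ B₁ ϱ A B hab hA₀ hA₁ hB₁ hϱ hA₁ϱ hA hsupp hbound hBre hBdiff hB'
    have hb0 : ∀ x ∈ Set.Icc a b, ‖A x‖ ≤ cA * A₀ := by
      intro x hx
      have := hbound 0 le_rfl x hx
      simpa using this
    have hnorm : ∀ x ∈ Set.Icc a b, ‖A x * Complex.exp (2*(π:ℂ)*Complex.I * B (x:ℂ))‖ ≤ cA * A₀ := by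
      intro x hx
      rw [norm_mul, Complex.norm_exp]
      have hre : (2*(π:ℂ)*Complex.I * B (x:ℂ)).re = 0 := by
        have := hBre x hx
        simp [Complex.mul_re, Complex.mul_im, this]
      rw [hre, Real.exp_zero, mul_one]
      exact hb0 x hx
    have hest := intervalIntegral.norm_integral_le_of_norm_le_const
      (C := cA * A₀) (f := fun x => A x * Complex.exp (2*(π:ℂ)*Complex.I * B (x:ℂ)))
      (a := a) (b := b) (fun x hx => hnorm x (Set.mem_Icc_of_Ioc (Set.uIoc_of_le hab ▸ hx)))
    simp only [Nat.cast_zero, neg_zero, Real.rpow_zero, mul_one]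
    refine hest.trans ?_
    rw [_root_.abs_of_nonneg (sub_nonneg.mpr hab)]
    have : cA * A₀ ≤ (|cA|+1) * A₀ := by
      have : cA ≤ |cA| + 1 := (le_abs_self cA).trans (by linarith)
      nlinarith
    nlinarith [sub_nonneg.mpr hab]
  | succ P IH =>
    intro cA cB
    obtain ⟨C, hC, hIH⟩ := IH (cA * cB * ((P+2) * (P+1).factorial * 2^(P+1))) cB
    refine ⟨C, hC, ?_⟩
    intro a b A₀ A₁ B₁ ϱ A B hab hA₀ hA₁ hB₁ hϱ hA₁ϱ hA hsupp hbound hBre hBdiff hB'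
    classical
    set T := {z : ℂ | ∃ x ∈ Set.Icc a b, ‖z - (x:ℂ)‖ < ϱ} with hTdef
    have haI : a ∈ Set.Icc a b := ⟨le_rfl, hab⟩
    have haT : (a:ℂ) ∈ T := ⟨a, haI, by simpa using hϱ⟩
    have hTopen : IsOpen T := by
      have : T = ⋃ x ∈ Set.Icc a b, Metric.ball (x:ℂ) ϱ := by
        ext z
        simp [hTdef, Metric.mem_ball, Complex.dist_eq]
      rw [this]
      exact isOpen_biUnion fun x _ => Metric.isOpen_ball
    have hcB : 0 < cB := by
      have h1 := hB' _ haT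
      nlinarith [norm_nonneg (deriv B (a:ℂ)), hB₁]
    have hcA : 0 ≤ cA := by
      have := hbound 0 (Nat.zero_le _) a haI
      simp only [Nat.cast_zero, neg_zero, Real.rpow_zero, mul_one, iteratedDeriv_zero] at this
      nlinarith [norm_nonneg (A a)]
    have hBanal : AnalyticOnNhd ℂ B T := hBdiff.analyticOnNhd hTopen
    have hB'diff : DifferentiableOn ℂ (deriv B) T := hBanal.deriv.differentiableOn
    have hne : ∀ z ∈ T, deriv B z ≠ 0 := by
      intro z hz h0
      have := hB' z hz
      rw [h0] at this
      simp at this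
      nlinarith
    have h2πI : (2*(π:ℂ)*Complex.I) ≠ 0 := by
      simp [Complex.ext_iff, Real.pi_ne_zero]
    set H : ℂ → ℂ := fun z => (2*(π:ℂ)*Complex.I * deriv B z)⁻¹ with hHdef
    have hHdiff : DifferentiableOn ℂ H T := by
      apply DifferentiableOn.inv
      · exact (differentiable_const _).differentiableOn.mul hB'diff
      · exact fun z hz => mul_ne_zero h2πI (hne z hz)
    set U : Set ℝ := (fun t : ℝ => (t:ℂ)) ⁻¹' T with hUdef
    have hUopen : IsOpen U := hTopen.preimage Complex.continuous_ofReal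
    have hIccU : Set.Icc a b ⊆ U := fun x hx => ⟨x, hx, by simpa using hϱ⟩
    set h : ℝ → ℂ := fun t => H t with hhdef
    have hhU : ContDiffOn ℝ ((P+1:ℕ) : ℕ∞) h U := by
      have h1 : ContDiffOn ℂ ((P+1:ℕ) : ℕ∞) H T :=
        (hHdiff.analyticOnNhd hTopen).contDiffOn hTopen.uniqueDiffOn
      have h2 : ContDiffOn ℝ ((P+1:ℕ) : ℕ∞) H T := h1.restrict_scalars ℝ
      exact h2.comp (Complex.ofRealCLM.contDiff.contDiffOn) (fun x hx => hx)
    set g : ℝ → ℂ := fun t => A t * h t with hgdef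
    have hAzero : ∀ t, t ∉ Set.Icc a b → A t = 0 := by
      intro t ht
      by_contra hAt
      exact ht (hsupp (Function.mem_support.mpr hAt))
    have hgC : ContDiff ℝ ((P+1:ℕ) : ℕ∞) g := by
      rw [contDiff_iff_contDiffAt]
      intro t
      by_cases htU : t ∈ U
      · exact hA.contDiffAt.mul ((hhU t htU).contDiffAt (hUopen.mem_nhds htU))
      · have htI : t ∉ Set.Icc a b := fun hc => htU (hIccU hc)
        have hev : g =ᶠ[nhds t] (fun _ => 0) := by
          filter_upwards [(isClosed_Icc (a := a) (b := b)).isOpen_compl.mem_nhds htI] with s hs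
          simp [hgdef, hAzero s hs]
        exact (contDiffAt_const (c := (0:ℂ))).congr_of_eventuallyEq hev
    have hone_le : (1 : WithTop ℕ∞) ≤ ((P+1:ℕ) : ℕ∞) := by
      exact_mod_cast Nat.succ_le_succ (Nat.zero_le P)
    have hgdiff : Differentiable ℝ g := hgC.differentiable (by simp)
    set E : ℝ → ℂ := fun t => Complex.exp (2*(π:ℂ)*Complex.I * B (t:ℂ)) with hEdef
    have hEderiv : ∀ t ∈ U, HasDerivAt E (E t * (2*(π:ℂ)*Complex.I * deriv B (t:ℂ))) t := by
      intro t ht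
      have hBt : HasDerivAt B (deriv B (t:ℂ)) (t:ℂ) :=
        ((hBanal (t:ℂ) ht).differentiableAt).hasDerivAt
      have h1 : HasDerivAt (fun s : ℝ => B (s:ℂ)) (deriv B (t:ℂ)) t := hBt.comp_ofReal
      have h2 : HasDerivAt (fun s : ℝ => 2*(π:ℂ)*Complex.I * B (s:ℂ))
          (2*(π:ℂ)*Complex.I * deriv B (t:ℂ)) t := h1.const_mul _
      exact h2.cexp
    have hEcontU : ContinuousOn E U := fun t ht => (hEderiv t ht).continuousAt.continuousWithinAt
    have hgE : ∀ t ∈ Set.uIcc a b,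
        HasDerivAt (fun s => g s * E s) (deriv g t * E t + A t * E t) t := by
      intro t ht
      have htU : t ∈ U := hIccU (Set.uIcc_of_le hab ▸ ht)
      have hg' : HasDerivAt g (deriv g t) t := (hgdiff t).hasDerivAt
      have hE' := hEderiv t htU
      have hprod := hg'.mul hE'
      have hnz : (2*(π:ℂ)*Complex.I * deriv B (t:ℂ)) ≠ 0 := mul_ne_zero h2πI (hne _ htU)
      have hcanc : h t * (2*(π:ℂ)*Complex.I * deriv B (t:ℂ)) = 1 := inv_mul_cancel₀ hnz
      have heq : deriv g t * E t + g t * (E t * (2*(π:ℂ)*Complex.I * deriv B (t:ℂ)))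
          = deriv g t * E t + A t * E t := by
        congr 1
        calc g t * (E t * (2*(π:ℂ)*Complex.I * deriv B (t:ℂ)))
            = A t * (h t * (2*(π:ℂ)*Complex.I * deriv B (t:ℂ))) * E t := by
              rw [hgdef]; ring
          _ = A t * E t := by rw [hcanc]; ring
      rw [← heq]
      exact hprod
    have hAa : A a = 0 := boundary_zero_left hA.continuous hsupp
    have hAb : A b = 0 := boundary_zero_right hA.continuous hsupp
    have hEcont : ContinuousOn E (Set.uIcc a b) :=
      hEcontU.mono (Set.uIcc_of_le hab ▸ hIccU)
    have hInt1 : IntervalIntegrable (fun t => A t * E t) MeasureTheory.volume a b :=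
      (hA.continuous.continuousOn.mul hEcont).intervalIntegrable
    have hdgcont : Continuous (deriv g) := hgC.continuous_deriv hone_le
    have hInt2 : IntervalIntegrable (fun t => deriv g t * E t) MeasureTheory.volume a b :=
      (hdgcont.continuousOn.mul hEcont).intervalIntegrable
    have hFTC := intervalIntegral.integral_eq_sub_of_hasDerivAt hgE (hInt2.add hInt1)
    have hzero : (∫ t in a..b, (deriv g t * E t + A t * E t)) = 0 := by
      rw [hFTC]
      simp [hgdef, hAa, hAb]
    have hsplit := intervalIntegral.integral_add hInt2 hInt1
    have hmain_eq : (∫ t in a..b, A t * E t) = ∫ t in a..b, (-deriv g t) * E t := by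
      have hsum : (∫ t in a..b, deriv g t * E t) + (∫ t in a..b, A t * E t) = 0 := by
        rw [← hsplit]; exact hzero
      have h2 : (∫ t in a..b, (-deriv g t) * E t) = - ∫ t in a..b, deriv g t * E t := by
        simp only [neg_mul]
        exact intervalIntegral.integral_neg
      rw [h2]
      linear_combination hsum
    -- the new amplitude
    set A' : ℝ → ℂ := fun t => -deriv g t with hA'def
    have hA'C : ContDiff ℝ ((P:ℕ) : ℕ∞) A' := by
      have hg1 : ContDiff ℝ (((P:ℕ) : ℕ∞) + 1) g := by exact_mod_cast hgC
      exact ((contDiff_succ_iff_deriv.mp hg1).2.2).neg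
    have hA'supp : Function.support A' ⊆ Set.Icc a b := by
      intro t ht
      by_contra htI
      apply ht
      have hev : g =ᶠ[nhds t] (fun _ => 0) := by
        filter_upwards [(isClosed_Icc (a := a) (b := b)).isOpen_compl.mem_nhds htI] with s hs
        simp [hgdef, hAzero s hs]
      have : deriv g t = 0 := by
        rw [hev.deriv_eq]
        simp
      simp [hA'def, this]
    have hA'bound : ∀ ν : ℕ, ν ≤ P → ∀ x ∈ Set.Icc a b,
        ‖iteratedDeriv ν A' x‖ ≤
          (cA * cB * ((P+2) * (P+1).factorial * 2^(P+1))) * (A₀ * (A₁*B₁)⁻¹) * A₁ ^ (-(ν:ℝ)) := by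
      intro ν hν x hx
      have hxU : x ∈ U := hIccU hx
      have hxT : (x:ℂ) ∈ T := hxU
      have e1 : ‖iteratedDeriv ν A' x‖ = ‖iteratedDeriv (ν+1) g x‖ := by
        rw [iteratedDeriv_succ', hA'def]
        rw [show (fun t => -deriv g t) = -deriv g from rfl, iteratedDeriv_neg, norm_neg]
      have hconv : ∀ (k : ℕ) (f : ℝ → ℂ),
          ‖iteratedFDerivWithin ℝ k f U x‖ = ‖iteratedDeriv k f x‖ := by
        intro k f
        rw [iteratedFDerivWithin_of_isOpen k hUopen hxU,
          norm_iteratedFDeriv_eq_norm_iteratedDeriv]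
      have hAon : ContDiffOn ℝ ((P+1:ℕ) : ℕ∞) A U := hA.contDiffOn
      have hleib := norm_iteratedFDerivWithin_mul_le (𝕜 := ℝ) hAon hhU hUopen.uniqueDiffOn hxU
        (n := ν+1) (by exact_mod_cast Nat.succ_le_succ hν)
      -- bound on derivatives of h
      have hhb : ∀ m : ℕ, ‖iteratedDeriv m h x‖ ≤
          m.factorial * (cB/(2*π*B₁)) / (A₁/2)^m := by
        intro m
        have e2 : iteratedDeriv m h x = iteratedDeriv m H (x:ℂ) :=
          iteratedDeriv_comp_ofReal hTopen hHdiff m x hxT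
        rw [e2]
        have hball : Metric.closedBall (x:ℂ) (A₁/2) ⊆ T := by
          intro z hz
          refine ⟨x, hx, ?_⟩
          rw [← Complex.dist_eq]
          calc dist z (x:ℂ) ≤ A₁/2 := Metric.mem_closedBall.mp hz
            _ < ϱ := by linarith
        have hMb : ∀ z ∈ Metric.closedBall (x:ℂ) (A₁/2), ‖H z‖ ≤ cB/(2*π*B₁) := by
          intro z hz
          have hzT : z ∈ T := hball hz
          have hBz := hB' z hzT
          have habs : B₁/cB ≤ ‖deriv B z‖ := by
            rw [div_le_iff₀ hcB]
            linarith [hBz]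
          have hnorm : ‖H z‖ = (2*π*‖deriv B z‖)⁻¹ := by
            rw [hHdef]
            simp only [norm_inv, norm_mul, Complex.norm_I, Complex.norm_real, Real.norm_eq_abs,
              Complex.norm_two, mul_one]
            rw [_root_.abs_of_nonneg Real.pi_pos.le]
          rw [hnorm]
          rw [show cB/(2*π*B₁) = (2*π*(B₁/cB))⁻¹ by field_simp]
          apply inv_anti₀ (by positivity)
          gcongr
        exact cauchy_est (by positivity) (hHdiff.mono hball) hMb m
      -- assemble
      calc ‖iteratedDeriv ν A' x‖ = ‖iteratedFDerivWithin ℝ (ν+1) (fun y => A y * h y) U x‖ := by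
            rw [e1, hconv]
        _ ≤ ∑ i ∈ Finset.range (ν+2), ((ν+1).choose i : ℝ) *
              ‖iteratedFDerivWithin ℝ i A U x‖ * ‖iteratedFDerivWithin ℝ (ν+1-i) h U x‖ := hleib
        _ ≤ ∑ i ∈ Finset.range (ν+2),
              (cA * cB * ((P+1).factorial * 2^(P+1)) * (A₀ * (A₁ * B₁)⁻¹) * A₁ ^ (-(ν:ℝ))) := by
            apply Finset.sum_le_sum
            intro i hi
            have hi' : i ≤ ν + 1 := by
              have := Finset.mem_range.mp hi; omega
            have hb1 : ‖iteratedFDerivWithin ℝ i A U x‖ ≤ cA * A₀ * A₁ ^ (-(i:ℝ)) := by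
              rw [hconv]
              exact hbound i (by omega) x hx
            have hb2 : ‖iteratedFDerivWithin ℝ (ν+1-i) h U x‖ ≤
                (ν+1-i).factorial * (cB/(2*π*B₁)) / (A₁/2)^(ν+1-i) := by
              rw [hconv]
              exact hhb (ν+1-i)
            calc ((ν+1).choose i : ℝ) * ‖iteratedFDerivWithin ℝ i A U x‖ *
                  ‖iteratedFDerivWithin ℝ (ν+1-i) h U x‖
                ≤ ((ν+1).choose i : ℝ) * (cA * A₀ * A₁ ^ (-(i:ℝ))) *
                  ((ν+1-i).factorial * (cB/(2*π*B₁)) / (A₁/2)^(ν+1-i)) := by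
                  apply mul_le_mul
                  · exact mul_le_mul_of_nonneg_left hb1 (by positivity)
                  · exact hb2
                  · exact norm_nonneg _
                  · positivity
              _ ≤ cA * cB * ((P+1).factorial * 2^(P+1)) * (A₀ * (A₁ * B₁)⁻¹) * A₁ ^ (-(ν:ℝ)) :=
                  term_bound P ν i hν hi' hcA hcB.le hA₀ hA₁ hB₁
        _ = (ν+2) * (cA * cB * ((P+1).factorial * 2^(P+1)) * (A₀ * (A₁ * B₁)⁻¹) * A₁ ^ (-(ν:ℝ))) := by
            rw [Finset.sum_const, Finset.card_range]
            push_cast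
            ring
        _ ≤ (cA * cB * ((P+2) * (P+1).factorial * 2^(P+1))) * (A₀ * (A₁*B₁)⁻¹) * A₁ ^ (-(ν:ℝ)) := by
            have h6 : ((ν:ℝ)+2) ≤ ((P:ℝ)+2) := by
              have : (ν:ℝ) ≤ P := by exact_mod_cast hν
              linarith
            have h7 : (0:ℝ) ≤ cA * cB * ((P+1).factorial * 2^(P+1)) * (A₀ * (A₁ * B₁)⁻¹) *
                A₁ ^ (-(ν:ℝ)) := by positivity
            nlinarith [h7]
    have happ := hIH a b (A₀ * (A₁*B₁)⁻¹) A₁ B₁ ϱ A' B hab (by positivity) hA₁ hB₁ hϱ hA₁ϱ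
      hA'C hA'supp hA'bound hBre hBdiff hB'
    have hfinal_eq : ‖∫ x in a..b, A x * Complex.exp (2*(π:ℂ)*Complex.I * B (x:ℂ))‖
        = ‖∫ x in a..b, A' x * Complex.exp (2*(π:ℂ)*Complex.I * B (x:ℂ))‖ := by
      rw [show (∫ x in a..b, A x * Complex.exp (2*(π:ℂ)*Complex.I * B (x:ℂ)))
          = ∫ t in a..b, A t * E t from rfl, hmain_eq]
    rw [hfinal_eq]
    refine happ.trans (le_of_eq ?_)
    have hP1 : (-(((P+1):ℕ):ℝ)) = (-(P:ℝ)) + (-1) := by push_cast; ring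
    rw [hP1, Real.rpow_add (by positivity), Real.rpow_neg_one]
    ring


/-- **Lemma 6** (partial integration, Jutila–Motohashi): if `A` is `P` times differentiable,
compactly supported in `[a,b]`, with `|A^{(ν)}| ≪ A₀ A₁^{-ν}` for `ν ≤ P`, and `B` is
real-valued on `[a,b]`, holomorphic on the set of points within distance `ϱ` of `[a,b]`,
with `0 < B₁ ≪ |B'|` there, then
`∫_a^b A(x) e(B(x)) dx ≪ A₀ (A₁B₁)^{-P} (1 + A₁/ϱ)^P (b-a)`. -/
theorem partial_integration_lemma (P : ℕ) (cA cB : ℝ) :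
    ∃ C > 0, ∀ (a b A₀ A₁ B₁ ϱ : ℝ) (A : ℝ → ℂ) (B : ℂ → ℂ),
      a ≤ b → 0 < A₀ → 0 < A₁ → 0 < B₁ → 0 < ϱ →
      -- `A` is `P ≥ 0` times differentiable and compactly supported in `[a,b]`
      ContDiff ℝ (P : ℕ∞) A →
      Function.support A ⊆ Set.Icc a b →
      (∀ ν : ℕ, ν ≤ P → ∀ x ∈ Set.Icc a b, ‖iteratedDeriv ν A x‖ ≤ cA * A₀ * A₁ ^ (-(ν:ℝ))) →
      -- `B` is real-valued on `[a,b]` and holomorphic on all points within distance `ϱ`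
      (∀ x ∈ Set.Icc a b, (B (x:ℂ)).im = 0) →
      DifferentiableOn ℂ B {z : ℂ | ∃ x ∈ Set.Icc a b, ‖z - (x:ℂ)‖ < ϱ} →
      -- `0 < B₁ ≪ |B'(z)|` on that domain
      (∀ z ∈ {z : ℂ | ∃ x ∈ Set.Icc a b, ‖z - (x:ℂ)‖ < ϱ},
        B₁ ≤ cB * ‖deriv B z‖) →
      ‖∫ x in a..b, A x * Complex.exp (2*(π:ℂ)*Complex.I * B (x:ℂ))‖
        ≤ C * A₀ * (A₁ * B₁) ^ (-(P:ℝ)) * (1 + A₁/ϱ) ^ (P:ℝ) * (b - a) := by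
  obtain ⟨C, hC, hmain⟩ := aux_lemma P cA cB
  refine ⟨C, hC, ?_⟩
  intro a b A₀ A₁ B₁ ϱ A B hab hA₀ hA₁ hB₁ hϱ hA hsupp hbound hBre hBdiff hB'
  set A₁' : ℝ := (A₁⁻¹ + ϱ⁻¹)⁻¹ with hA₁'def
  have hA₁'pos : 0 < A₁' := by positivity
  have hle1 : A₁' ≤ A₁ := by
    rw [hA₁'def, ← inv_inv A₁]
    exact inv_anti₀ (by positivity) (by simp [le_add_iff_nonneg_right]; positivity)
  have hle2 : A₁' ≤ ϱ := by
    rw [hA₁'def, ← inv_inv ϱ]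
    exact inv_anti₀ (by positivity) (by simp [le_add_iff_nonneg_left]; positivity)
  have hcA : 0 ≤ cA := by
    have := hbound 0 (Nat.zero_le _) a (by simp [hab])
    simp only [Nat.cast_zero, neg_zero, Real.rpow_zero, mul_one, iteratedDeriv_zero] at this
    nlinarith [norm_nonneg (A a)]
  have hbound' : ∀ ν : ℕ, ν ≤ P → ∀ x ∈ Set.Icc a b,
      ‖iteratedDeriv ν A x‖ ≤ cA * A₀ * A₁' ^ (-(ν:ℝ)) := by
    intro ν hν x hx
    refine (hbound ν hν x hx).trans ?_
    have : A₁ ^ (-(ν:ℝ)) ≤ A₁' ^ (-(ν:ℝ)) :=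
      Real.rpow_le_rpow_of_nonpos hA₁'pos hle1 (neg_nonpos.mpr (Nat.cast_nonneg ν))
    exact mul_le_mul_of_nonneg_left this (by positivity)
  have key := hmain a b A₀ A₁' B₁ ϱ A B hab hA₀ hA₁'pos hB₁ hϱ hle2 hA hsupp hbound' hBre hBdiff hB'
  refine key.trans (le_of_eq ?_)
  have heq : A₁' * B₁ = (A₁ * B₁) / (1 + A₁/ϱ) := by
    rw [hA₁'def]
    field_simp
  rw [heq, Real.div_rpow (by positivity) (by positivity), Real.rpow_neg (by positivity),
    Real.rpow_neg (by positivity), div_eq_mul_inv, inv_inv]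
  ring
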